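/- (Guaranteed early termination) Let f : ℝⁿ → ℝ be convex, let X ⊆ ℝⁿ be nonempty, closed and convex, let X* ⊆ X be the (nonempty) set of minimizers of f over X, and let f* = min_{x∈X} f(x). Let σ > 0 and assume f(x) ≥ f* + (σ/2)·dist²(x, X*) for all x ∈ X. Let B_in > 0. If x_t ∈ X, g is a subgradient of f at x_t (i.e. f(y) ≥ f(x_t) + ⟨g, y − x_t⟩ for all y ∈ ℝⁿ), s ∈ N_X(x_t) = {s : ⟨s, y − x_t⟩ ≤ 0 for all y ∈ X}, and ‖g + s‖ ≤ √((σ/2)·B_in), then f(x_t) − f* ≤ B_in. -/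

import Mathlib

open RealInnerProductSpace

/-- guaranteed early termination of the subproblem solver. -/
theorem early_termination
    (n : ℕ)
    (f : EuclideanSpace ℝ (Fin n) → ℝ)
    (hf : ConvexOn ℝ Set.univ f)
    (X : Set (EuclideanSpace ℝ (Fin n)))
    (hXne : X.Nonempty) (hXclosed : IsClosed X) (hXconvex : Convex ℝ X)
    (Xstar : Set (EuclideanSpace ℝ (Fin n)))
    (hXstar : Xstar = {y | y ∈ X ∧ ∀ z ∈ X, f y ≤ f z})
    (hXstar_ne : Xstar.Nonempty)
    (fstar : ℝ)
    (hfstar_val : ∀ y ∈ Xstar, f y = fstar)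
    (hfstar_min : ∀ x ∈ X, fstar ≤ f x)
    (σ : ℝ) (hσ : 0 < σ)
    (hQG : ∀ x ∈ X, f x ≥ fstar + σ / 2 * (Metric.infDist x Xstar) ^ 2)
    (Bin : ℝ) (hBin : 0 < Bin)
    (xtk : EuclideanSpace ℝ (Fin n)) (hxtk : xtk ∈ X)
    (g : EuclideanSpace ℝ (Fin n))
    (hg : ∀ y, f y ≥ f xtk + ⟪g, y - xtk⟫)
    (s : EuclideanSpace ℝ (Fin n))
    (hs : ∀ y ∈ X, ⟪s, y - xtk⟫ ≤ 0)
    (hstop : ‖g + s‖ ≤ Real.sqrt (σ / 2 * Bin)) :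
    f xtk - fstar ≤ Bin := by
  set d := Metric.infDist xtk Xstar with hd
  set Δ := f xtk - fstar with hΔ
  set C := ‖g + s‖ with hC
  have hC0 : 0 ≤ C := norm_nonneg _
  have hd0 : 0 ≤ d := Metric.infDist_nonneg
  -- step 1: Δ ≤ C * d
  have key : ∀ x ∈ Xstar, Δ ≤ C * dist xtk x := by
    intro x hx
    have hxX : x ∈ X := by rw [hXstar] at hx; exact hx.1
    have hfx : f x = fstar := hfstar_val x hx
    have h1 : fstar ≥ f xtk + ⟪g, x - xtk⟫ := hfx ▸ hg x
    have h2 : ⟪s, x - xtk⟫ ≤ 0 := hs x hxX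
    have h3 : Δ ≤ ⟪g + s, xtk - x⟫ := by
      have : ⟪g + s, xtk - x⟫ = -⟪g, x - xtk⟫ - ⟪s, x - xtk⟫ := by
        rw [inner_add_left]
        rw [show (xtk - x : EuclideanSpace ℝ (Fin n)) = -(x - xtk) by abel]
        rw [inner_neg_right, inner_neg_right]; ring
      rw [this]; linarith
    calc Δ ≤ ⟪g + s, xtk - x⟫ := h3
      _ ≤ C * ‖xtk - x‖ := by
          have := real_inner_le_norm (g + s) (xtk - x); linarith [this]
      _ = C * dist xtk x := by rw [dist_eq_norm]
  have hCd : Δ ≤ C * d := by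
    by_contra hcon
    push_neg at hcon
    obtain ⟨ε, hε, hεlt⟩ : ∃ ε > 0, C * d + C * ε < Δ := by
      rcases eq_or_lt_of_le hC0 with hCe | hCp
      · refine ⟨1, one_pos, ?_⟩
        rw [← hCe] at hcon ⊢
        simpa using hcon
      · refine ⟨(Δ - C * d) / (2 * C), div_pos (by linarith) (by linarith), ?_⟩
        have : C * ((Δ - C * d) / (2 * C)) = (Δ - C * d) / 2 := by
          field_simp
        rw [this]; linarith
    obtain ⟨x, hx, hdist⟩ := (Metric.infDist_lt_iff hXstar_ne).mp
      (show Metric.infDist xtk Xstar < d + ε by rw [← hd]; linarith)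
    have := key x hx
    nlinarith [hC0]
  -- step 2: quadratic growth
  have hd2 : fstar + σ / 2 * d ^ 2 ≤ f xtk := hQG xtk hxtk
  have hΔd : σ / 2 * d ^ 2 ≤ Δ := by rw [hΔ]; linarith
  have hC2 : C ^ 2 ≤ σ / 2 * Bin := by
    have h := Real.sq_sqrt (by positivity : (0:ℝ) ≤ σ / 2 * Bin)
    nlinarith [Real.sqrt_nonneg (σ / 2 * Bin)]
  rcases le_or_gt Δ 0 with h | h
  · linarith
  · nlinarith [sq_nonneg d, sq_nonneg C, mul_nonneg hC0 hd0]
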